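/- Let X₁, X₂ be Banach spaces, V₁ ⊆ X₁, V₂ ⊆ X₂ nonempty closed convex sets, X = X₁ ⊕_∞ X₂ and V = V₁ × V₂. If for each i ∈ {1,2} the triplet (X_i, V_i, CB(X_i)) has property-(P₁), then (X, V, CB(X)) has property-(P₁). -/
import Mathlib


open Metric Set Bornology Pointwise

/-- The farthest distance `r(v,B) = sup_{b ∈ B} ‖v - b‖`. -/
noncomputable def farr {X : Type*} [NormedAddCommGroup X] (v : X) (B : Set X) : ℝ :=
  ⨆ b : B, ‖v - (b : X)‖

/-- The restricted Chebyshev radius `rad_V(B) = inf_{v ∈ V} r(v,B)`. -/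
noncomputable def rad {X : Type*} [NormedAddCommGroup X] (V B : Set X) : ℝ :=
  ⨅ v : V, farr (v : X) B

/-- The set of restricted Chebyshev centers of `B` in `V`. -/
noncomputable def cheb {X : Type*} [NormedAddCommGroup X] (V B : Set X) : Set X :=
  {v ∈ V | farr v B = rad V B}

/-- Property-(P₁) for the triplet `(X, V, CB(X))`: restricted Chebyshev centers exist for
every nonempty closed bounded set and near-centers are close to centers. -/
noncomputable def propP1 {X : Type*} [NormedAddCommGroup X] (V : Set X) : Prop :=
  ∀ B : Set X, B.Nonempty → IsClosed B → IsBounded B →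
    (cheb V B).Nonempty ∧ ∀ ε > (0 : ℝ), ∃ δ > (0 : ℝ),
      {v ∈ V | farr v B ≤ rad V B + δ} ⊆ cheb V B + closedBall 0 ε

section lemmas
variable {X : Type*} [NormedAddCommGroup X] {v : X} {B : Set X}

lemma farr_nonneg (v : X) (B : Set X) : 0 ≤ farr v B :=
  Real.iSup_nonneg fun _ => norm_nonneg _

lemma farr_bdd (v : X) (hB : IsBounded B) :
    BddAbove (Set.range fun b : B => ‖v - (b : X)‖) := by
  obtain ⟨r, hr⟩ := hB.subset_closedBall v
  refine ⟨r, ?_⟩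
  rintro x ⟨b, rfl⟩
  have := hr b.2
  rw [mem_closedBall, dist_comm] at this
  simpa [dist_eq_norm] using this

lemma le_farr (hB : IsBounded B) {b : X} (hb : b ∈ B) : ‖v - b‖ ≤ farr v B :=
  le_ciSup (farr_bdd v hB) ⟨b, hb⟩

lemma farr_le (hB : B.Nonempty) {r : ℝ} (h : ∀ b ∈ B, ‖v - b‖ ≤ r) : farr v B ≤ r := by
  haveI := hB.to_subtype
  exact ciSup_le fun b => h b b.2

lemma farr_closure (v : X) (hne : B.Nonempty) (hB : IsBounded B) :
    farr v (closure B) = farr v B := by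
  refine le_antisymm (farr_le hne.closure fun b hb => ?_)
    (farr_le hne fun b hb => le_farr hB.closure (subset_closure hb))
  have hcl : IsClosed {x : X | ‖v - x‖ ≤ farr v B} :=
    isClosed_le (by fun_prop) continuous_const
  exact hcl.closure_subset_iff.mpr (fun b hb => le_farr hB hb) hb
end lemmas

section lemmas
variable {X : Type*} [NormedAddCommGroup X] {v : X} {V B : Set X}

lemma farr_convex [NormedSpace ℝ X] (hne : B.Nonempty) (hbB : IsBounded B) {w : X} {t : ℝ}
    (ht0 : 0 ≤ t) (ht1 : t ≤ 1) :
    farr (t • w + (1 - t) • v) B ≤ t * farr w B + (1 - t) * farr v B := by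
  refine farr_le hne fun b hb => ?_
  have h1 : t • w + (1 - t) • v - b = t • (w - b) + (1 - t) • (v - b) := by
    simp [smul_sub, sub_smul]; abel
  calc ‖t • w + (1 - t) • v - b‖ = ‖t • (w - b) + (1 - t) • (v - b)‖ := by rw [h1]
    _ ≤ ‖t • (w - b)‖ + ‖(1 - t) • (v - b)‖ := norm_add_le _ _
    _ = t * ‖w - b‖ + (1 - t) * ‖v - b‖ := by
        rw [norm_smul, norm_smul, Real.norm_eq_abs, Real.norm_eq_abs,
          abs_of_nonneg ht0, abs_of_nonneg (by linarith)]
    _ ≤ t * farr w B + (1 - t) * farr v B := by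
        have h2 : ‖w - b‖ ≤ farr w B := le_farr hbB hb
        have h3 : ‖v - b‖ ≤ farr v B := le_farr hbB hb
        have h4 : (0:ℝ) ≤ 1 - t := by linarith
        nlinarith [mul_le_mul_of_nonneg_left h2 ht0, mul_le_mul_of_nonneg_left h3 h4]

lemma rad_le_farr (hv : v ∈ V) : rad V B ≤ farr v B :=
  ciInf_le (f := fun u : V => farr (u : X) B) ⟨0, by rintro x ⟨u, rfl⟩; exact farr_nonneg _ _⟩ ⟨v, hv⟩

lemma le_rad (hV : V.Nonempty) {r : ℝ} (h : ∀ v ∈ V, r ≤ farr v B) : r ≤ rad V B := by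
  haveI := hV.to_subtype
  exact le_ciInf fun u => h u u.2

lemma rad_nonneg (hV : V.Nonempty) : 0 ≤ rad V B :=
  le_rad hV fun v _ => farr_nonneg _ _
end lemmas

lemma isBounded_fst {X₁ X₂ : Type*} [NormedAddCommGroup X₁] [NormedAddCommGroup X₂]
    {B : Set (X₁ × X₂)} (hB : IsBounded B) : IsBounded (Prod.fst '' B) := by
  obtain ⟨r, hr⟩ := hB.subset_closedBall 0
  refine (isBounded_closedBall (x := (0:X₁)) (r := r)).subset ?_
  rintro x ⟨b, hb, rfl⟩
  have := hr hb
  rw [mem_closedBall_zero_iff] at this ⊢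
  exact le_trans (norm_fst_le b) this

lemma isBounded_snd {X₁ X₂ : Type*} [NormedAddCommGroup X₁] [NormedAddCommGroup X₂]
    {B : Set (X₁ × X₂)} (hB : IsBounded B) : IsBounded (Prod.snd '' B) := by
  obtain ⟨r, hr⟩ := hB.subset_closedBall 0
  refine (isBounded_closedBall (x := (0:X₂)) (r := r)).subset ?_
  rintro x ⟨b, hb, rfl⟩
  have := hr hb
  rw [mem_closedBall_zero_iff] at this ⊢
  exact le_trans (norm_snd_le b) this

lemma farr_prod {X₁ X₂ : Type*} [NormedAddCommGroup X₁] [NormedAddCommGroup X₂]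
    (v₁ : X₁) (v₂ : X₂) {B : Set (X₁ × X₂)} (hne : B.Nonempty) (hb : IsBounded B) :
    farr (v₁, v₂) B = max (farr v₁ (Prod.fst '' B)) (farr v₂ (Prod.snd '' B)) := by
  refine le_antisymm (farr_le hne fun b hbB => ?_) (max_le ?_ ?_)
  · rw [Prod.norm_def]
    exact max_le_max (le_farr (isBounded_fst hb) ⟨b, hbB, rfl⟩)
      (le_farr (isBounded_snd hb) ⟨b, hbB, rfl⟩)
  · refine farr_le (hne.image _) ?_
    rintro x ⟨b, hbB, rfl⟩
    exact le_trans (by rw [Prod.norm_def ((v₁,v₂) - b)]; exact le_max_left _ _)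
      (le_farr hb hbB)
  · refine farr_le (hne.image _) ?_
    rintro x ⟨b, hbB, rfl⟩
    exact le_trans (by rw [Prod.norm_def ((v₁,v₂) - b)]; exact le_max_right _ _)
      (le_farr hb hbB)

/-- Key one-coordinate lemma: near-`R`-centers are close to the `R`-sublevel set of `farr`. -/
lemma key {X : Type*} [NormedAddCommGroup X] [NormedSpace ℝ X] {V B : Set X}
    (hVconv : Convex ℝ V) (hBne : B.Nonempty) (hBb : IsBounded B)
    {w : X} (hw : w ∈ V) (hfw : farr w B = rad V B) {R ε : ℝ}
    (hR : rad V B ≤ R) (hε : 0 < ε)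
    (hδ : ∃ δ > (0:ℝ), {v ∈ V | farr v B ≤ rad V B + δ} ⊆ cheb V B + closedBall 0 ε) :
    ∃ δ > (0:ℝ), ∀ v ∈ V, farr v B ≤ R + δ →
      ∃ s ∈ V, farr s B ≤ R ∧ ‖v - s‖ ≤ ε := by
  set r := rad V B with hr
  have hr0 : 0 ≤ r := hfw ▸ farr_nonneg w B
  rcases eq_or_lt_of_le hR with heq | hlt
  · -- r = R : use property-(P₁) continuity
    obtain ⟨δ, hδ0, hsub⟩ := hδ
    refine ⟨δ, hδ0, fun v hv hfv => ?_⟩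
    have : v ∈ cheb V B + closedBall 0 ε := hsub ⟨hv, by rw [← heq] at hfv; exact hfv⟩
    obtain ⟨c, hc, e, he, hce⟩ := this
    have hce' : c + e = v := hce
    refine ⟨c, hc.1, by rw [hc.2, ← heq], ?_⟩
    rw [mem_closedBall_zero_iff] at he
    have : v - c = e := by rw [← hce']; abel
    rw [this]; exact he
  · -- r < R : move towards the center w along a segment
    set c := R - r with hc
    have hc0 : 0 < c := by simp [hc]; linarith
    have hR0 : 0 ≤ R := le_trans hr0 hR
    refine ⟨min c (ε * c / (2 * R + c + 1)), lt_min hc0 (by positivity), fun v hv hfv => ?_⟩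
    set δ := min c (ε * c / (2 * R + c + 1)) with hδdef
    have hδ0 : 0 < δ := lt_min hc0 (by positivity)
    have hδc : δ ≤ c := min_le_left _ _
    have hδε : δ ≤ ε * c / (2 * R + c + 1) := min_le_right _ _
    set t := δ / (δ + c) with ht
    have htc : 0 < δ + c := by linarith
    have ht0 : 0 ≤ t := by positivity
    have ht1 : t ≤ 1 := by rw [ht, div_le_one htc]; linarith
    refine ⟨t • w + (1 - t) • v, hVconv hw hv ht0 (by linarith) (by ring), ?_, ?_⟩
    · -- farr bound
      have h1 : farr (t • w + (1 - t) • v) B ≤ t * r + (1 - t) * (R + δ) := by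
        refine le_trans (farr_convex hBne hBb ht0 ht1) ?_
        rw [hfw]
        have : (0:ℝ) ≤ 1 - t := by linarith
        nlinarith [mul_le_mul_of_nonneg_left hfv this]
      have h2 : t * (δ + c) = δ := by rw [ht]; field_simp
      have : t * r + (1 - t) * (R + δ) = R + δ - t * (δ + c) := by rw [hc]; ring
      rw [this, h2] at h1; linarith
    · -- distance bound
      obtain ⟨b, hb⟩ := hBne
      have hvb : ‖v - b‖ ≤ R + δ := le_trans (le_farr hBb hb) hfv
      have hwb : ‖w - b‖ ≤ R := le_trans (le_farr hBb hb) (by rw [hfw]; exact hR)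
      have hvw : ‖v - w‖ ≤ 2 * R + δ := by
        calc ‖v - w‖ = ‖(v - b) - (w - b)‖ := by abel_nf
          _ ≤ ‖v - b‖ + ‖w - b‖ := norm_sub_le _ _
          _ ≤ 2 * R + δ := by linarith
      have hdiff : v - (t • w + (1 - t) • v) = t • (v - w) := by
        simp [smul_sub, sub_smul]; abel
      rw [hdiff, norm_smul, Real.norm_eq_abs, abs_of_nonneg ht0]
      have htle : t ≤ ε / (2 * R + c + 1) := by
        rw [ht, div_le_div_iff₀ htc (by linarith)]
        have h3 : δ * (2 * R + c + 1) ≤ ε * c := by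
          rw [le_div_iff₀ (by linarith : (0:ℝ) < 2*R+c+1)] at hδε
          exact hδε
        nlinarith
      have hnn : ‖v - w‖ ≤ 2 * R + c := by linarith
      calc t * ‖v - w‖ ≤ (ε / (2 * R + c + 1)) * (2 * R + c) := by
            apply mul_le_mul htle hnn (norm_nonneg _) (by positivity)
        _ ≤ ε := by rw [div_mul_eq_mul_div, div_le_iff₀ (by linarith)]; nlinarith

theorem stmt7 {X₁ X₂ : Type*} [NormedAddCommGroup X₁] [NormedSpace ℝ X₁] [CompleteSpace X₁]
    [NormedAddCommGroup X₂] [NormedSpace ℝ X₂] [CompleteSpace X₂]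
    (V₁ : Set X₁) (V₂ : Set X₂)
    (hV₁ne : V₁.Nonempty) (hV₁c : IsClosed V₁) (hV₁conv : Convex ℝ V₁)
    (hV₂ne : V₂.Nonempty) (hV₂c : IsClosed V₂) (hV₂conv : Convex ℝ V₂)
    (h₁ : propP1 V₁) (h₂ : propP1 V₂) :
    propP1 (V₁ ×ˢ V₂) := by
  intro B hBne hBc hBb
  -- closed projections
  set B₁ : Set X₁ := closure (Prod.fst '' B) with hB₁def
  set B₂ : Set X₂ := closure (Prod.snd '' B) with hB₂def
  have hB₁ne : B₁.Nonempty := (hBne.image _).closure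
  have hB₂ne : B₂.Nonempty := (hBne.image _).closure
  have hB₁b : IsBounded B₁ := (isBounded_fst hBb).closure
  have hB₂b : IsBounded B₂ := (isBounded_snd hBb).closure
  -- farr over B equals max of farr over B₁, B₂
  have hfp : ∀ v₁ : X₁, ∀ v₂ : X₂, farr (v₁, v₂) B = max (farr v₁ B₁) (farr v₂ B₂) := by
    intro v₁ v₂
    rw [farr_prod v₁ v₂ hBne hBb, hB₁def, hB₂def,
      farr_closure v₁ (hBne.image _) (isBounded_fst hBb),
      farr_closure v₂ (hBne.image _) (isBounded_snd hBb)]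
  obtain ⟨⟨w₁, hw₁V, hw₁f⟩, hcont₁⟩ := h₁ B₁ hB₁ne isClosed_closure hB₁b
  obtain ⟨⟨w₂, hw₂V, hw₂f⟩, hcont₂⟩ := h₂ B₂ hB₂ne isClosed_closure hB₂b
  set r₁ := rad V₁ B₁
  set r₂ := rad V₂ B₂
  set R := max r₁ r₂ with hRdef
  -- rad of the product
  have hrad : rad (V₁ ×ˢ V₂) B = R := by
    refine le_antisymm ?_ (le_rad (hV₁ne.prod hV₂ne) ?_)
    · calc rad (V₁ ×ˢ V₂) B ≤ farr (w₁, w₂) B :=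
            rad_le_farr (Set.mem_prod.mpr ⟨hw₁V, hw₂V⟩)
        _ = R := by rw [hfp, hw₁f, hw₂f]
    · rintro ⟨v₁, v₂⟩ hv
      rw [Set.mem_prod] at hv
      rw [hfp]
      exact max_le_max (rad_le_farr hv.1) (rad_le_farr hv.2)
  constructor
  · exact ⟨(w₁, w₂), Set.mem_prod.mpr ⟨hw₁V, hw₂V⟩, by rw [hfp, hw₁f, hw₂f, hrad]⟩
  · intro ε hε
    obtain ⟨δ₁, hδ₁0, hkey₁⟩ := key hV₁conv hB₁ne hB₁b hw₁V hw₁f (le_max_left r₁ r₂) hε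
      (hcont₁ ε hε)
    obtain ⟨δ₂, hδ₂0, hkey₂⟩ := key hV₂conv hB₂ne hB₂b hw₂V hw₂f (le_max_right r₁ r₂) hε
      (hcont₂ ε hε)
    refine ⟨min δ₁ δ₂, lt_min hδ₁0 hδ₂0, ?_⟩
    rintro ⟨v₁, v₂⟩ ⟨hvV, hvf⟩
    rw [Set.mem_prod] at hvV
    rw [hrad, hfp] at hvf
    obtain ⟨s₁, hs₁V, hs₁f, hs₁d⟩ := hkey₁ v₁ hvV.1
      (le_trans (le_trans (le_max_left _ _) hvf) (by linarith [min_le_left δ₁ δ₂]))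
    obtain ⟨s₂, hs₂V, hs₂f, hs₂d⟩ := hkey₂ v₂ hvV.2
      (le_trans (le_trans (le_max_right _ _) hvf) (by linarith [min_le_right δ₁ δ₂]))
    refine ⟨(s₁, s₂), ⟨Set.mem_prod.mpr ⟨hs₁V, hs₂V⟩, ?_⟩, (v₁ - s₁, v₂ - s₂), ?_, by simp⟩
    · rw [hrad, hfp]
      refine le_antisymm (max_le hs₁f hs₂f) ?_
      exact max_le_max (rad_le_farr hs₁V) (rad_le_farr hs₂V)
    · rw [mem_closedBall_zero_iff, Prod.norm_def]
      exact max_le hs₁d hs₂d
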